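/- Under the assumptions that |S_i| = C(n+r,r), S_i is r-generic, and μ^i is supported on all of S_i with positive weights for i = 1,2, the optimal value of the moment relaxation equals the optimal value of the original separation problem: τ_r^s(y¹,y²) = τ^s. -/

import Mathlib

noncomputable section
open Classical Finset Matrix

/-- Multi-indices in `n` variables of total degree at most `r`. -/
abbrev MIdx (n r : ℕ) := {α : Fin n → ℕ // ∑ i, α i ≤ r}

instance MIdx.fintype (n r : ℕ) : Fintype (MIdx n r) := by
  have h : ∀ a : MIdx n r, ∀ i, a.1 i ≤ r := fun a i =>
    le_trans (Finset.single_le_sum (fun j _ => Nat.zero_le (a.1 j)) (Finset.mem_univ i)) a.2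
  have hinj : Function.Injective
      (fun a : MIdx n r => (fun i => (⟨a.1 i, Nat.lt_succ_of_le (h a i)⟩ : Fin (r+1)))) := by
    intro a b hab
    apply Subtype.ext; funext i
    have := congrFun hab i
    simpa [Fin.mk.injEq] using this
  have : Finite (MIdx n r) := Finite.of_injective _ hinj
  exact Fintype.ofFinite _

/-- The monomial `x^α = x₁^{α₁} ⋯ x_n^{α_n}`. -/
def mono {n : ℕ} (x : Fin n → ℝ) (α : Fin n → ℕ) : ℝ := ∏ i, x i ^ α i

/-- Moments `y_α = ∑_{x ∈ S} μ_x x^α` of the measure `μ = ∑_{x∈S} μ_x δ_x`. -/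
def moments {n : ℕ} (S : Finset (Fin n → ℝ)) (μ : (Fin n → ℝ) → ℝ) (α : Fin n → ℕ) : ℝ :=
  ∑ x ∈ S, μ x * mono x α

/-- The localizing matrix `M_r(θ y)(α,β) = ∑_γ θ_γ y_{α+β+γ}`. -/
def locMat (n r : ℕ) (θ : MvPolynomial (Fin n) ℝ) (y : (Fin n → ℕ) → ℝ) :
    Matrix (MIdx n r) (MIdx n r) ℝ :=
  fun α β => ∑ γ ∈ θ.support, θ.coeff γ * y (fun i => α.1 i + β.1 i + γ i)

/-- Optimal value (infimum, in the extended reals) of the original separation problem `P^s`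
for datasets `S₁`, `S₂`, feasible set `Θ` and objective `f`. -/
def sepVal {n : ℕ} (Θ : Set (MvPolynomial (Fin n) ℝ)) (f : MvPolynomial (Fin n) ℝ → ℝ)
    (S1 S2 : Finset (Fin n → ℝ)) : EReal :=
  sInf ((fun θ => ((f θ : ℝ) : EReal)) ''
    {θ | θ ∈ Θ ∧ (∀ x ∈ S1, 0 ≤ MvPolynomial.eval x θ) ∧
      (∀ x ∈ S2, MvPolynomial.eval x θ ≤ 0)})

/-- Optimal value (infimum, in the extended reals) of the moment relaxation `P^s_r(y¹,y²)`. -/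
def relaxVal {n : ℕ} (Θ : Set (MvPolynomial (Fin n) ℝ)) (f : MvPolynomial (Fin n) ℝ → ℝ)
    (r : ℕ) (y1 y2 : (Fin n → ℕ) → ℝ) : EReal :=
  sInf ((fun θ => ((f θ : ℝ) : EReal)) ''
    {θ | θ ∈ Θ ∧ (locMat n r θ y1).PosSemidef ∧ (locMat n r (-θ) y2).PosSemidef})
/-- The moment matrix `M_r(y)(α,β) = y_{α+β}`. -/
def momMat (n r : ℕ) (y : (Fin n → ℕ) → ℝ) : Matrix (MIdx n r) (MIdx n r) ℝ :=
  fun α β => y (fun i => α.1 i + β.1 i)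

/-- `S` is `r`-generic: no nonzero polynomial of degree at most `r` vanishes on all of `S`. -/
def rGeneric {n : ℕ} (S : Finset (Fin n → ℝ)) (r : ℕ) : Prop :=
  ∀ g : MvPolynomial (Fin n) ℝ, g.totalDegree ≤ r →
    (∀ x ∈ S, MvPolynomial.eval x g = 0) → g = 0
/-! ### Auxiliary lemmas -/

lemma card_MIdx : ∀ (n r : ℕ), Fintype.card (MIdx n r) = (n + r).choose r := by
  intro n
  induction n with
  | zero =>
    intro r
    have h1 : Fintype.card (MIdx 0 r) = 1 := by
      refine Fintype.card_eq_one_iff.mpr ⟨⟨fun i => i.elim0, by simp⟩, ?_⟩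
      intro a; apply Subtype.ext; funext i; exact i.elim0
    rw [h1, Nat.zero_add, Nat.choose_self]
  | succ n ih =>
    intro r
    have e : MIdx (n+1) r ≃ Σ k : Fin (r+1), MIdx n (r - k.1) :=
      { toFun := fun a =>
          ⟨⟨a.1 0, Nat.lt_succ_of_le (le_trans (Finset.single_le_sum
              (fun j _ => Nat.zero_le (a.1 j)) (Finset.mem_univ 0)) a.2)⟩,
            ⟨Fin.tail a.1, by
              have h := a.2
              rw [Fin.sum_univ_succ] at h
              show ∑ i : Fin n, a.1 i.succ ≤ r - a.1 0
              omega⟩⟩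
        invFun := fun b =>
          ⟨Fin.cons b.1.1 b.2.1, by
            rw [Fin.sum_univ_succ]
            simp only [Fin.cons_zero, Fin.cons_succ]
            have h := b.2.2
            have h2 := b.1.2
            omega⟩
        left_inv := fun a => Subtype.ext (Fin.cons_self_tail a.1)
        right_inv := fun b => by
          rcases b with ⟨k, v⟩
          refine Sigma.ext rfl (heq_of_eq (Subtype.ext (funext fun i => ?_)))
          exact Fin.cons_succ (α := fun _ : Fin (n+1) => ℕ) k.1 v.1 i }
    rw [Fintype.card_congr e, Fintype.card_sigma]
    simp only [ih]
    rw [Fin.sum_univ_eq_sum_range (fun i => (n + (r - i)).choose (r - i)) (r+1)]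
    have hrefl := Finset.sum_range_reflect (fun i => (n + (r - i)).choose (r - i)) (r+1)
    rw [← hrefl]
    have hcong : ∀ j ∈ Finset.range (r+1),
        (n + (r - (r + 1 - 1 - j))).choose (r - (r + 1 - 1 - j)) = (j + n).choose n := by
      intro j hj
      rw [Finset.mem_range] at hj
      have h1 : r - (r + 1 - 1 - j) = j := by omega
      rw [h1]
      have h2 : (n + j).choose ((n + j) - n) = (n + j).choose n :=
        Nat.choose_symm (Nat.le_add_right n j)
      have h3 : (n + j) - n = j := by omega
      rw [h3] at h2
      rw [h2, Nat.add_comm]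
    rw [Finset.sum_congr rfl hcong, Nat.sum_range_add_choose r n]
    have h4 : (n + 1 + r).choose ((n + 1 + r) - (n + 1)) = (n + 1 + r).choose (n + 1) :=
      Nat.choose_symm (by omega)
    have h5 : (n + 1 + r) - (n + 1) = r := by omega
    rw [h5] at h4
    rw [h4]
    congr 1
    omega

lemma locMat_moments {n r : ℕ} (S : Finset (Fin n → ℝ)) (μ : (Fin n → ℝ) → ℝ)
    (θ : MvPolynomial (Fin n) ℝ) (α β : MIdx n r) :
    locMat n r θ (moments S μ) α β
      = ∑ x ∈ S, μ x * MvPolynomial.eval x θ * (mono x α.1 * mono x β.1) := by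
  unfold locMat moments
  simp only [Finset.mul_sum]
  rw [Finset.sum_comm]
  refine Finset.sum_congr rfl fun x hx => ?_
  rw [MvPolynomial.eval_eq']
  rw [Finset.mul_sum, Finset.sum_mul]
  refine Finset.sum_congr rfl fun γ _ => ?_
  have h1 : mono x (fun i => α.1 i + β.1 i + γ i) = mono x α.1 * mono x β.1 * mono x γ := by
    simp [mono, pow_add, Finset.prod_mul_distrib]
  have h2 : (∏ i, x i ^ γ i) = mono x γ := rfl
  rw [h1, h2]; ring

lemma quadform {n r : ℕ} (S : Finset (Fin n → ℝ)) (μ : (Fin n → ℝ) → ℝ)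
    (θ : MvPolynomial (Fin n) ℝ) (v : MIdx n r → ℝ) :
    v ⬝ᵥ (locMat n r θ (moments S μ)) *ᵥ v
      = ∑ x ∈ S, μ x * MvPolynomial.eval x θ * (∑ α : MIdx n r, v α * mono x α.1)^2 := by
  simp only [mulVec, dotProduct, locMat_moments, Finset.mul_sum, Finset.sum_mul]
  have h1 : ∀ α : MIdx n r,
      (∑ β : MIdx n r, ∑ x ∈ S,
        v α * (μ x * MvPolynomial.eval x θ * (mono x α.1 * mono x β.1) * v β))
      = ∑ x ∈ S, ∑ β : MIdx n r,
        v α * (μ x * MvPolynomial.eval x θ * (mono x α.1 * mono x β.1) * v β) :=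
    fun α => Finset.sum_comm
  simp only [h1]
  rw [Finset.sum_comm]
  refine Finset.sum_congr rfl fun x _ => ?_
  rw [sq, Finset.sum_mul_sum, Finset.mul_sum]
  refine Finset.sum_congr rfl fun α _ => ?_
  rw [Finset.mul_sum]
  refine Finset.sum_congr rfl fun β _ => ?_
  ring

lemma locMat_isHermitian {n r : ℕ} (θ : MvPolynomial (Fin n) ℝ) (y : (Fin n → ℕ) → ℝ) :
    (locMat n r θ y).IsHermitian := by
  unfold Matrix.IsHermitian
  ext α β
  simp only [Matrix.conjTranspose_apply, star_trivial, locMat]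
  refine Finset.sum_congr rfl fun γ _ => ?_
  congr 1
  have hfun : (fun i => β.1 i + α.1 i + γ i) = fun i => α.1 i + β.1 i + γ i := by
    funext i; ring
  rw [hfun]

lemma exists_dual {n r : ℕ} (S : Finset (Fin n → ℝ)) (hcard : S.card = (n + r).choose r)
    (hgen : rGeneric S r) (x0 : Fin n → ℝ) (hx0 : x0 ∈ S) :
    ∃ w : MIdx n r → ℝ, ∀ x ∈ S,
      (∑ α : MIdx n r, w α * mono x α.1) = if x = x0 then 1 else 0 := by
  let E : (MIdx n r → ℝ) →ₗ[ℝ] ({x // x ∈ S} → ℝ) :=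
    { toFun := fun w x => ∑ α : MIdx n r, w α * mono x.1 α.1
      map_add' := by
        intro u v; funext x
        simp [add_mul, Finset.sum_add_distrib]
      map_smul' := by
        intro c u; funext x
        simp [Finset.mul_sum, mul_assoc] }
  have hinj : Function.Injective E := by
    refine LinearMap.ker_eq_bot.mp (LinearMap.ker_eq_bot'.mpr fun w hw => ?_)
    set p : MvPolynomial (Fin n) ℝ :=
      ∑ α : MIdx n r, MvPolynomial.monomial (Finsupp.equivFunOnFinite.symm α.1) (w α) with hp
    have hdeg : p.totalDegree ≤ r := by
      refine MvPolynomial.totalDegree_finsetSum_le fun α _ => ?_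
      refine le_trans (MvPolynomial.totalDegree_monomial_le _ _) ?_
      have hs : (Finsupp.equivFunOnFinite.symm α.1).sum (fun _ e => id e) = ∑ i, α.1 i := by
        rw [Finsupp.sum_fintype]
        · simp
        · intro i; rfl
      exact le_trans (le_of_eq hs) α.2
    have heval : ∀ x ∈ S, MvPolynomial.eval x p = 0 := by
      intro x hx
      have h := congrFun hw ⟨x, hx⟩
      rw [hp]
      rw [map_sum]
      simp only [MvPolynomial.eval_monomial]
      have hmono : ∀ α : MIdx n r,
          (Finsupp.equivFunOnFinite.symm α.1).prod (fun i e => x i ^ e) = mono x α.1 := by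
        intro α
        rw [Finsupp.prod_fintype _ _ (fun i => pow_zero _)]
        rfl
      simp only [hmono]
      exact h
    have hp0 : p = 0 := hgen p hdeg heval
    funext β
    have hcoeff := congrArg (MvPolynomial.coeff (Finsupp.equivFunOnFinite.symm β.1)) hp0
    rw [hp] at hcoeff
    rw [MvPolynomial.coeff_sum] at hcoeff
    simp only [MvPolynomial.coeff_monomial, MvPolynomial.coeff_zero] at hcoeff
    have hiff : ∀ α : MIdx n r,
        (Finsupp.equivFunOnFinite.symm α.1 = Finsupp.equivFunOnFinite.symm β.1) ↔ α = β := by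
      intro α
      constructor
      · intro h
        exact Subtype.ext (Finsupp.equivFunOnFinite.symm.injective h)
      · intro h; rw [h]
    rw [Finset.sum_congr rfl (fun α _ => by rw [if_congr (hiff α) rfl rfl])] at hcoeff
    rw [Finset.sum_ite_eq' Finset.univ β w, if_pos (Finset.mem_univ β)] at hcoeff
    exact hcoeff
  have hsurj : Function.Surjective E := by
    have h1 : Module.finrank ℝ (MIdx n r → ℝ) = Module.finrank ℝ ({x // x ∈ S} → ℝ) := by
      rw [Module.finrank_fintype_fun_eq_card, Module.finrank_fintype_fun_eq_card,
        card_MIdx n r]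
      have : Fintype.card {x // x ∈ S} = S.card := Fintype.card_coe S
      rw [this, hcard]
    exact (LinearMap.injective_iff_surjective_of_finrank_eq_finrank h1).mp hinj
  obtain ⟨w, hw⟩ := hsurj (fun x => if x.1 = x0 then 1 else 0)
  refine ⟨w, fun x hx => ?_⟩
  have := congrFun hw ⟨x, hx⟩
  simpa [E] using this

lemma posSemidef_locMat_iff {n r : ℕ} (S : Finset (Fin n → ℝ))
    (hcard : S.card = (n + r).choose r) (hgen : rGeneric S r)
    (μ : (Fin n → ℝ) → ℝ) (hμ : ∀ x ∈ S, 0 < μ x) (θ : MvPolynomial (Fin n) ℝ) :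
    (locMat n r θ (moments S μ)).PosSemidef ↔ ∀ x ∈ S, 0 ≤ MvPolynomial.eval x θ := by
  constructor
  · intro h x0 hx0
    obtain ⟨w, hw⟩ := exists_dual S hcard hgen x0 hx0
    have h2 := h.dotProduct_mulVec_nonneg w
    have hstar : star w = w := by funext i; simp
    rw [hstar, quadform] at h2
    have hsum : ∑ x ∈ S, μ x * MvPolynomial.eval x θ * (∑ α : MIdx n r, w α * mono x α.1)^2
        = μ x0 * MvPolynomial.eval x0 θ := by
      rw [Finset.sum_congr rfl (fun x hx => by rw [hw x hx])]
      rw [Finset.sum_eq_single x0]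
      · simp
      · intro x hx hne; simp [hne]
      · intro hmem; exact absurd hx0 hmem
    rw [hsum] at h2
    nlinarith [hμ x0 hx0]
  · intro h
    refine .of_dotProduct_mulVec_nonneg (locMat_isHermitian θ _) fun v => ?_
    have hstar : star v = v := by funext i; simp
    rw [hstar, quadform]
    refine Finset.sum_nonneg fun x hx => ?_
    exact mul_nonneg (mul_nonneg (hμ x hx).le (h x hx)) (sq_nonneg _)

/-- if `|S_i| = C(n+r,r)`, `S_i` is `r`-generic and `μ^i` has positive weights
on all of `S_i` for `i = 1,2`, then the relaxation value equals the optimal value of the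
original separation problem: `τ^s_r(y¹,y²) = τ^s`. -/
theorem relaxVal_eq_sepVal {n r : ℕ} (S1 S2 : Finset (Fin n → ℝ))
    (Θ : Set (MvPolynomial (Fin n) ℝ)) (f : MvPolynomial (Fin n) ℝ → ℝ)
    (hcard1 : S1.card = (n + r).choose r) (hcard2 : S2.card = (n + r).choose r)
    (hgen1 : rGeneric S1 r) (hgen2 : rGeneric S2 r)
    (μ1 μ2 : (Fin n → ℝ) → ℝ)
    (hμ1 : ∀ x ∈ S1, 0 < μ1 x) (hμ1sum : ∑ x ∈ S1, μ1 x = 1)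
    (hμ2 : ∀ x ∈ S2, 0 < μ2 x) (hμ2sum : ∑ x ∈ S2, μ2 x = 1) :
    relaxVal Θ f r (moments S1 μ1) (moments S2 μ2) = sepVal Θ f S1 S2 := by
  unfold relaxVal sepVal
  have hset : {θ : MvPolynomial (Fin n) ℝ | θ ∈ Θ ∧
        (locMat n r θ (moments S1 μ1)).PosSemidef ∧
        (locMat n r (-θ) (moments S2 μ2)).PosSemidef}
      = {θ | θ ∈ Θ ∧ (∀ x ∈ S1, 0 ≤ MvPolynomial.eval x θ) ∧
        (∀ x ∈ S2, MvPolynomial.eval x θ ≤ 0)} := by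
    ext θ
    simp only [Set.mem_setOf_eq]
    constructor
    · rintro ⟨hΘ, h1, h2⟩
      refine ⟨hΘ, (posSemidef_locMat_iff S1 hcard1 hgen1 μ1 hμ1 θ).mp h1, fun x hx => ?_⟩
      have := (posSemidef_locMat_iff S2 hcard2 hgen2 μ2 hμ2 (-θ)).mp h2 x hx
      rw [map_neg] at this
      linarith
    · rintro ⟨hΘ, h1, h2⟩
      refine ⟨hΘ, (posSemidef_locMat_iff S1 hcard1 hgen1 μ1 hμ1 θ).mpr h1,
        (posSemidef_locMat_iff S2 hcard2 hgen2 μ2 hμ2 (-θ)).mpr fun x hx => ?_⟩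
      rw [map_neg]
      linarith [h2 x hx]
  rw [hset]
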